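/- For q ≥ 4, every codeword of C(A_q) is at Hamming distance exactly q−1 from every codeword of the repetition code Rep(q,q); consequently C(A_q) ∪ Rep(q,q) has minimum distance 3 and Γ₁(C(A_q) ∪ Rep(q,q)) = Γ₁(C(A_q)) ∪ Γ₁(Rep(q,q)). -/

import Mathlib

/-- The permutation code `C(T) = {α(g) : g ∈ T}` in `H(q,q)`. -/
def permCode {q : ℕ} (T : Set (Equiv.Perm (Fin q))) : Set (Fin q → Fin q) :=
  {v | ∃ g ∈ T, v = fun i => g i}

/-- The repetition code `Rep(q,q)` in `H(q,q)`. -/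
def repCode (q : ℕ) : Set (Fin q → Fin q) :=
  {v | ∃ a : Fin q, v = fun _ => a}

/-- The set of neighbours `Γ₁(C)` of a code `C`. -/
def codeNbrs {m q : ℕ} (C : Set (Fin m → Fin q)) : Set (Fin m → Fin q) :=
  {v | v ∉ C ∧ ∃ c ∈ C, hammingDist v c = 1}

open Finset

lemma dist_perm_const {q : ℕ} (g : Equiv.Perm (Fin q)) (a : Fin q) :
    hammingDist (fun i => g i) (fun _ => a) = q - 1 := by
  classical
  have hd : hammingDist (fun i => g i) (fun _ : Fin q => a)
      = #(Finset.univ.filter fun i : Fin q => g i ≠ a) := rfl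
  have hneg : (Finset.univ.filter fun i : Fin q => ¬ g i ≠ a) = {g.symm a} := by
    ext i
    simp [not_not, Equiv.apply_eq_iff_eq_symm_apply]
  have := Finset.card_filter_add_card_filter_not
    (s := (Finset.univ : Finset (Fin q))) (p := fun i => g i ≠ a)
  rw [hneg] at this
  simp only [Finset.card_singleton, Finset.card_univ, Fintype.card_fin] at this
  omega

lemma dist_perm_perm {q : ℕ} (g h : Equiv.Perm (Fin q)) :
    hammingDist (fun i => g i) (fun i => h i) = (h⁻¹ * g).support.card := by
  classical
  have hd : hammingDist (fun i => g i) (fun i => h i)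
      = #(Finset.univ.filter fun i : Fin q => g i ≠ h i) := rfl
  rw [hd]
  congr 1
  ext i
  simp only [Finset.mem_filter, Equiv.Perm.mem_support, Equiv.Perm.mul_apply,
    Finset.mem_univ, true_and, Equiv.symm_apply_apply, ne_eq]
  constructor
  · intro hne he; exact hne (by simpa using congrArg h he)
  · intro hne he; exact hne (by rw [he]; simp)

lemma alt_support_three {q : ℕ} (σ : Equiv.Perm (Fin q))
    (hσ : σ ∈ alternatingGroup (Fin q)) (hne : σ ≠ 1) : 3 ≤ σ.support.card := by
  have h2 : 1 < σ.support.card := Equiv.Perm.one_lt_card_support_of_ne_one hne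
  by_contra h
  have h2' : σ.support.card = 2 := by omega
  have hsw : σ.IsSwap := Equiv.Perm.card_support_eq_two.mp h2'
  have := hsw.sign_eq
  rw [Equiv.Perm.mem_alternatingGroup] at hσ
  rw [hσ] at this
  exact absurd this (by decide)

lemma dist_three {q : ℕ} (hq : 4 ≤ q) :
    ∀ u ∈ permCode (alternatingGroup (Fin q) : Set (Equiv.Perm (Fin q))) ∪ repCode q,
        ∀ v ∈ permCode (alternatingGroup (Fin q) : Set (Equiv.Perm (Fin q))) ∪ repCode q,
          u ≠ v → 3 ≤ hammingDist u v := by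
  rintro u (⟨g, hg, rfl⟩ | ⟨a, rfl⟩) v (⟨h, hh, rfl⟩ | ⟨b, rfl⟩) huv
  · rw [dist_perm_perm]
    refine alt_support_three _ (mul_mem (inv_mem hh) hg) ?_
    intro h1
    exact huv (by rw [inv_mul_eq_one.mp h1])
  · rw [dist_perm_const]; omega
  · rw [hammingDist_comm, dist_perm_const]; omega
  · have hab : a ≠ b := fun h => huv (by rw [h])
    have : hammingDist (fun _ : Fin q => a) (fun _ : Fin q => b) = q := by
      have : (Finset.univ.filter fun _ : Fin q => a ≠ b) = Finset.univ := by
        simp [hab]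
      simpa [hammingDist] using congrArg Finset.card this
    omega

lemma exists_dist_three (q : ℕ) (hq : 4 ≤ q) :
    (∃ u ∈ permCode (alternatingGroup (Fin q) : Set (Equiv.Perm (Fin q))) ∪ repCode q,
        ∃ v ∈ permCode (alternatingGroup (Fin q) : Set (Equiv.Perm (Fin q))) ∪ repCode q,
          u ≠ v ∧ hammingDist u v = 3) := by
  have h0 : (0 : ℕ) < q := by omega
  set i0 : Fin q := ⟨0, by omega⟩
  set i1 : Fin q := ⟨1, by omega⟩
  set i2 : Fin q := ⟨2, by omega⟩
  have h01 : i0 ≠ i1 := by simp [i0, i1, Fin.ext_iff]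
  have h02 : i0 ≠ i2 := by simp [i0, i2, Fin.ext_iff]
  have h12 : i1 ≠ i2 := by simp [i1, i2, Fin.ext_iff]
  set σ : Equiv.Perm (Fin q) := Equiv.swap i0 i1 * Equiv.swap i0 i2 with hσdef
  have h3 : σ.IsThreeCycle := Equiv.Perm.isThreeCycle_swap_mul_swap_same h01 h02 h12
  have hσmem : σ ∈ alternatingGroup (Fin q) := h3.mem_alternatingGroup
  refine ⟨fun i => σ i, Or.inl ⟨σ, hσmem, rfl⟩, fun i => (1 : Equiv.Perm (Fin q)) i,
    Or.inl ⟨1, one_mem _, rfl⟩, ?_, ?_⟩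
  · intro h
    have : σ i0 = i0 := by
      have := congrFun h i0
      simpa using this
    have hs : σ i0 = i2 := by
      simp [hσdef, Equiv.swap_apply_of_ne_of_ne, h12.symm, h02.symm]
    rw [hs] at this
    exact h02 this.symm
  · rw [dist_perm_perm]
    simpa using h3.card_support

/-- For `q ≥ 4`: every codeword of `C(A_q)` is at Hamming distance exactly `q - 1` from
every codeword of `Rep(q,q)`; consequently `C(A_q) ∪ Rep(q,q)` has minimum distance 3 and
`Γ₁(C(A_q) ∪ Rep(q,q)) = Γ₁(C(A_q)) ∪ Γ₁(Rep(q,q))`. -/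
theorem stmt18 (q : ℕ) (hq : 4 ≤ q) :
    (∀ g ∈ alternatingGroup (Fin q), ∀ a : Fin q,
        hammingDist (fun i => g i) (fun _ => a) = q - 1) ∧
    (∀ u ∈ permCode (alternatingGroup (Fin q) : Set (Equiv.Perm (Fin q))) ∪ repCode q,
        ∀ v ∈ permCode (alternatingGroup (Fin q) : Set (Equiv.Perm (Fin q))) ∪ repCode q,
          u ≠ v → 3 ≤ hammingDist u v) ∧
    (∃ u ∈ permCode (alternatingGroup (Fin q) : Set (Equiv.Perm (Fin q))) ∪ repCode q,
        ∃ v ∈ permCode (alternatingGroup (Fin q) : Set (Equiv.Perm (Fin q))) ∪ repCode q,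
          u ≠ v ∧ hammingDist u v = 3) ∧
    codeNbrs (permCode (alternatingGroup (Fin q) : Set (Equiv.Perm (Fin q))) ∪ repCode q)
      = codeNbrs (permCode (alternatingGroup (Fin q) : Set (Equiv.Perm (Fin q))))
        ∪ codeNbrs (repCode q) := by
  refine ⟨fun g _ a => dist_perm_const g a, dist_three hq, exists_dist_three q hq, ?_⟩
  ext v
  constructor
  · rintro ⟨hv, c, hc, hd⟩
    have hvP : v ∉ permCode (alternatingGroup (Fin q) : Set (Equiv.Perm (Fin q))) :=
      fun h => hv (Or.inl h)
    have hvR : v ∉ repCode q := fun h => hv (Or.inr h)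
    rcases hc with hc | hc
    · exact Or.inl ⟨hvP, c, hc, hd⟩
    · exact Or.inr ⟨hvR, c, hc, hd⟩
  · rintro (⟨hv, c, hc, hd⟩ | ⟨hv, c, hc, hd⟩)
    · refine ⟨?_, c, Or.inl hc, hd⟩
      rintro (h | ⟨a, rfl⟩)
      · exact hv h
      · obtain ⟨g, hg, rfl⟩ := hc
        rw [hammingDist_comm, dist_perm_const] at hd
        omega
    · refine ⟨?_, c, Or.inr hc, hd⟩
      rintro (⟨g, hg, rfl⟩ | h)
      · obtain ⟨a, rfl⟩ := hc
        rw [dist_perm_const] at hd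
        omega
      · exact hv h
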